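/- Let R be a commutative local ring and let h ∈ R[t] be a monic polynomial of degree 2. Then the following are equivalent: (1) every matrix φ ∈ M_2(R) with characteristic polynomial equal to h is very clean; (2) there exists a factorization h = h_0 h_1 such that h_0 is monic with h_0(0) a unit, and h_1 is monic with h_1(1) a unit or h_1(−1) a unit. -/
import Mathlib

/-- An element `a` of a ring is *very clean* if there is an idempotent `e` commuting with `a`
such that `a - e` or `a + e` is a unit. -/
def IsVeryClean {R : Type*} [Ring R] (a : R) : Prop :=
  ∃ e : R, IsIdempotentElem e ∧ a * e = e * a ∧ (IsUnit (a - e) ∨ IsUnit (a + e))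

/-- A ring is *very clean* if every element is very clean. -/
def VeryCleanRing (R : Type*) [Ring R] : Prop :=
  ∀ a : R, IsVeryClean a

/-- An element `a` of a ring is *strongly clean* if there is an idempotent `e` commuting with `a`
such that `a - e` is a unit. -/
def IsStronglyClean {R : Type*} [Ring R] (a : R) : Prop :=
  ∃ e : R, IsIdempotentElem e ∧ a * e = e * a ∧ IsUnit (a - e)

/-- A ring is *strongly clean* if every element is strongly clean. -/
def StronglyCleanRing (R : Type*) [Ring R] : Prop :=
  ∀ a : R, IsStronglyClean a

section Aux

open Polynomial Matrix

variable {R : Type*} [CommRing R]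

private lemma charpoly_fin2 (M : Matrix (Fin 2) (Fin 2) R) :
    M.charpoly = X ^ 2 - C (M 0 0 + M 1 1) * X + C (M 0 0 * M 1 1 - M 0 1 * M 1 0) := by
  rw [Matrix.charpoly, Matrix.det_fin_two, charmatrix_apply_eq, charmatrix_apply_eq,
    charmatrix_apply_ne _ _ _ (by decide), charmatrix_apply_ne _ _ _ (by decide)]
  simp only [C_add, C_sub, C_mul]
  ring

private lemma poly_form (h : Polynomial R) (hm : h.Monic) (hd : h.natDegree = 2) :
    h = X ^ 2 + C (h.coeff 1) * X + C (h.coeff 0) := by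
  have h2 : h.coeff 2 = 1 := by
    have := hm.coeff_natDegree; rwa [hd] at this
  ext n
  match n with
  | 0 => simp
  | 1 => simp [coeff_X_pow]
  | 2 => simp [coeff_X_pow, coeff_C, h2]
  | (n+3) =>
    rw [Polynomial.coeff_eq_zero_of_natDegree_lt (by rw [hd]; omega)]
    rw [coeff_add, coeff_add, coeff_X_pow, if_neg (by omega), coeff_C_mul, coeff_X,
      if_neg (by omega), coeff_C, if_neg (by omega)]
    simp

private lemma eval_charpoly_fin2 (M : Matrix (Fin 2) (Fin 2) R) (x : R) :
    M.charpoly.eval x = (M - x • 1).det := by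
  rw [charpoly_fin2, Matrix.det_fin_two]
  simp [Matrix.sub_apply, Matrix.smul_apply, Matrix.one_apply]
  ring

private lemma unit_comb {A : Type*} [Ring A] [Algebra R A] {e : A} (he : e * e = e) {x y : R}
    (hx : IsUnit x) (hy : IsUnit y) : IsUnit (x • (1 - e) + y • e) := by
  obtain ⟨v, rfl⟩ := hx; obtain ⟨w, rfl⟩ := hy
  have h1 : (1 - e) * e = 0 := by rw [sub_mul, one_mul, he, sub_self]
  have h2 : e * (1 - e) = 0 := by rw [mul_sub, mul_one, he, sub_self]
  have h3 : (1 - e) * (1 - e) = 1 - e := by rw [mul_sub, mul_one, h1, sub_zero]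
  refine ⟨⟨_, ((↑v⁻¹ : R) • (1 - e) + (↑w⁻¹ : R) • e), ?_, ?_⟩, rfl⟩
  · rw [add_mul, mul_add, mul_add, smul_mul_smul_comm, smul_mul_smul_comm,
      smul_mul_smul_comm, smul_mul_smul_comm, h1, h2, h3, he]
    simp [sub_add_cancel]
  · rw [add_mul, mul_add, mul_add, smul_mul_smul_comm, smul_mul_smul_comm,
      smul_mul_smul_comm, smul_mul_smul_comm, h1, h2, h3, he]
    simp [sub_add_cancel]

end Aux

open Polynomial Matrix IsLocalRing

theorem very_clean_charpoly_criterion_deg_two (R : Type*) [CommRing R] [IsLocalRing R]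
    (h : Polynomial R) (hmonic : h.Monic) (hdeg : h.natDegree = 2) :
    (∀ φ : Matrix (Fin 2) (Fin 2) R, φ.charpoly = h → IsVeryClean φ) ↔
      ∃ h₀ h₁ : Polynomial R, h = h₀ * h₁ ∧
        h₀.Monic ∧ IsUnit (h₀.eval 0) ∧
        h₁.Monic ∧ (IsUnit (h₁.eval 1) ∨ IsUnit (h₁.eval (-1))) := by
  set c₀ := h.coeff 0 with hc₀
  set c₁ := h.coeff 1 with hc₁
  have hform : h = X ^ 2 + C c₁ * X + C c₀ := poly_form h hmonic hdeg
  constructor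
  · -- forward direction
    intro H
    set Cm : Matrix (Fin 2) (Fin 2) R := !![0, -c₀; 1, -c₁] with hCm
    have hcp : Cm.charpoly = h := by
      rw [charpoly_fin2, hform]
      norm_num [hCm]
    obtain ⟨e, he, hcomm, hul⟩ := H Cm hcp
    have he' : e * e = e := he
    -- entry relations from commutation
    have h01 : e 0 1 = -(c₀ * e 1 0) := by
      have hc := congrFun (congrFun hcomm 0) 0
      simp [hCm, Matrix.mul_apply, Fin.sum_univ_two] at hc
      linear_combination -hc
    have h11 : e 1 1 = e 0 0 - c₁ * e 1 0 := by
      have hc := congrFun (congrFun hcomm 1) 0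
      simp [hCm, Matrix.mul_apply, Fin.sum_univ_two] at hc
      linear_combination -hc
    -- idempotency relations
    have E1 : e 0 0 * e 0 0 - c₀ * (e 1 0 * e 1 0) = e 0 0 := by
      have hc := congrFun (congrFun he' 0) 0
      simp [Matrix.mul_apply, Fin.sum_univ_two] at hc
      linear_combination hc - e 1 0 * h01
    have E2 : 2 * (e 0 0 * e 1 0) - c₁ * (e 1 0 * e 1 0) = e 1 0 := by
      have hc := congrFun (congrFun he' 1) 0
      simp [Matrix.mul_apply, Fin.sum_univ_two] at hc
      linear_combination hc - e 1 0 * h11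
    by_cases hβ : IsUnit (e 1 0)
    · -- rank-one idempotent, e = α + β Cm with β a unit
      obtain ⟨v, hv⟩ := hβ
      set u : R := ((v⁻¹ : Rˣ) : R) with hu
      have hβu : e 1 0 * u = 1 := by rw [← hv, hu]; exact v.mul_inv
      set x := e 0 0 with hx
      have f1 : c₀ = (x * x - x) * (u * u) := by
        linear_combination (-(u^2)) * E1 - c₀ * (e 1 0 * u + 1) * hβu
      have f2 : c₁ = 2 * (x * u) - u := by
        linear_combination (-(u^2)) * E2 + (2 * x * u - c₁ * (e 1 0 * u + 1) - u) * hβu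
      have hdet1 : (Cm - e).det = x * u * (1 - (1 - x) * u) := by
        rw [Matrix.det_fin_two]
        have c00 : (Cm - e) 0 0 = 0 - e 0 0 := by simp [hCm]
        have c01 : (Cm - e) 0 1 = -c₀ - e 0 1 := by simp [hCm]
        have c10 : (Cm - e) 1 0 = 1 - e 1 0 := by simp [hCm]
        have c11 : (Cm - e) 1 1 = -c₁ - e 1 1 := by simp [hCm]
        rw [c00, c01, c10, c11]
        linear_combination x * h11 + (1 - e 1 0) * h01 + (x * (1 - e 1 0)) * f2 +
          ((1 - e 1 0)^2) * f1 +
          (x * u * (x - 1) * e 1 0 - x^2 - 2 * x * u * (x - 1)) * hβu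
      have hdet2 : (Cm + e).det = x * u * (-1 - (1 - x) * u) := by
        rw [Matrix.det_fin_two]
        have c00 : (Cm + e) 0 0 = 0 + e 0 0 := by simp [hCm]
        have c01 : (Cm + e) 0 1 = -c₀ + e 0 1 := by simp [hCm]
        have c10 : (Cm + e) 1 0 = 1 + e 1 0 := by simp [hCm]
        have c11 : (Cm + e) 1 1 = -c₁ + e 1 1 := by simp [hCm]
        rw [c00, c01, c10, c11]
        linear_combination x * h11 + (-(1 + e 1 0)) * h01 + (-(x * (1 + e 1 0))) * f2 +
          ((1 + e 1 0)^2) * f1 +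
          (x * u * (x - 1) * e 1 0 - x^2 + 2 * x * u * (x - 1)) * hβu
      have hd' : IsUnit (x * u * (1 - (1 - x) * u)) ∨ IsUnit (x * u * (-1 - (1 - x) * u)) := by
        rcases hul with hU | hU
        · left; rw [← hdet1]; exact (Matrix.isUnit_iff_isUnit_det _).mp hU
        · right; rw [← hdet2]; exact (Matrix.isUnit_iff_isUnit_det _).mp hU
      have hxu : IsUnit (x * u) := by
        rcases hd' with hd | hd
        · exact isUnit_of_mul_isUnit_left hd
        · exact isUnit_of_mul_isUnit_left hd
      refine ⟨X - C (-(x * u)), X - C ((1 - x) * u), ?_, monic_X_sub_C _,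
        ?_, monic_X_sub_C _, ?_⟩
      · rw [hform]
        have hs : c₁ = -(-(x * u) + (1 - x) * u) := by linear_combination f2
        have hp : c₀ = -(x * u) * ((1 - x) * u) := by linear_combination f1
        rw [hs, hp]
        simp only [C_add, C_sub, C_mul, C_neg]
        ring
      · simpa using hxu
      · rcases hd' with hd | hd
        · left
          have := isUnit_of_mul_isUnit_right hd
          simpa using this
        · right
          have := isUnit_of_mul_isUnit_right hd
          simpa using this
    · -- β not a unit
      have hβm : e 1 0 ∈ maximalIdeal R := by rwa [mem_maximalIdeal, mem_nonunits_iff]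
      have hαsplit : ¬IsUnit (e 0 0) ∨ ¬IsUnit (e 0 0 - 1) := by
        by_contra hcon
        push_neg at hcon
        have : IsUnit (e 0 0 * (e 0 0 - 1)) := hcon.1.mul hcon.2
        have h10 : e 0 0 * (e 0 0 - 1) = c₀ * e 1 0 * e 1 0 := by linear_combination E1
        rw [h10] at this
        exact hβ (isUnit_of_mul_isUnit_right this)
      rcases hαsplit with hα | hα
      · -- e = 0, Cm is a unit
        have hxm : e 0 0 ∈ maximalIdeal R := by rwa [mem_maximalIdeal, mem_nonunits_iff]
        have hdet : (1 - e).det =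
            1 - (e 0 0 * (2 - e 0 0) + e 1 0 * (e 0 0 * c₁ - c₁ - c₀ * e 1 0)) := by
          rw [Matrix.det_fin_two]
          simp only [Matrix.sub_apply, Matrix.one_apply_eq,
            Matrix.one_apply_ne (by decide : (0 : Fin 2) ≠ 1),
            Matrix.one_apply_ne (by decide : (1 : Fin 2) ≠ 0)]
          rw [h01, h11]
          ring
        have hunit : IsUnit (1 - e) := by
          rw [Matrix.isUnit_iff_isUnit_det, hdet]
          apply isUnit_one_sub_self_of_mem_nonunits
          rw [← mem_maximalIdeal]
          exact Ideal.add_mem _ (Ideal.mul_mem_right _ _ hxm) (Ideal.mul_mem_right _ _ hβm)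
        have he0 : e = 0 := by
          obtain ⟨w, hw⟩ := hunit
          have h0 : e * (1 - e) = 0 := by rw [mul_sub, mul_one, he', sub_self]
          calc e = e * (↑w * ↑w⁻¹) := by rw [w.mul_inv, mul_one]
            _ = (e * ↑w) * ↑w⁻¹ := by rw [mul_assoc]
            _ = (e * (1 - e)) * ↑w⁻¹ := by rw [hw]
            _ = 0 := by rw [h0, zero_mul]
        have hCu : IsUnit Cm := by
          rcases hul with hU | hU
          · rwa [he0, sub_zero] at hU
          · rwa [he0, add_zero] at hU
        have hc0u : IsUnit c₀ := by
          rw [Matrix.isUnit_iff_isUnit_det, Matrix.det_fin_two] at hCu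
          simpa [hCm] using hCu
        exact ⟨h, 1, (mul_one h).symm, hmonic,
          by rwa [← coeff_zero_eq_eval_zero], monic_one, Or.inl (by simp)⟩
      · -- e = 1
        have hxm : e 0 0 - 1 ∈ maximalIdeal R := by rwa [mem_maximalIdeal, mem_nonunits_iff]
        have hdet : e.det = 1 + ((e 0 0 - 1) * (2 + (e 0 0 - 1) - c₁ * e 1 0)
            + e 1 0 * (c₀ * e 1 0 - c₁)) := by
          rw [Matrix.det_fin_two, h01, h11]
          ring
        have hunit : IsUnit e := by
          rw [Matrix.isUnit_iff_isUnit_det, hdet]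
          have : ((e 0 0 - 1) * (2 + (e 0 0 - 1) - c₁ * e 1 0)
              + e 1 0 * (c₀ * e 1 0 - c₁)) ∈ maximalIdeal R :=
            Ideal.add_mem _ (Ideal.mul_mem_right _ _ hxm) (Ideal.mul_mem_right _ _ hβm)
          have h1u : IsUnit (1 - (-((e 0 0 - 1) * (2 + (e 0 0 - 1) - c₁ * e 1 0)
              + e 1 0 * (c₀ * e 1 0 - c₁)))) :=
            isUnit_one_sub_self_of_mem_nonunits _ (by
              rw [← mem_maximalIdeal]; exact neg_mem this)
          rwa [sub_neg_eq_add] at h1u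
        have he1 : e = 1 := by
          obtain ⟨w, hw⟩ := hunit
          have h0 : (1 - e) * e = 0 := by rw [sub_mul, one_mul, he', sub_self]
          have : (1 : Matrix (Fin 2) (Fin 2) R) - e = 0 := by
            calc (1 : Matrix (Fin 2) (Fin 2) R) - e = (1 - e) * (↑w * ↑w⁻¹) := by
                  rw [w.mul_inv, mul_one]
              _ = ((1 - e) * ↑w) * ↑w⁻¹ := by rw [mul_assoc]
              _ = ((1 - e) * e) * ↑w⁻¹ := by rw [hw]
              _ = 0 := by rw [h0, zero_mul]
          exact (sub_eq_zero.mp this).symm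
        rcases hul with hU | hU
        · refine ⟨1, h, (one_mul h).symm, monic_one, by simp, hmonic, Or.inl ?_⟩
          rw [← hcp, eval_charpoly_fin2, one_smul]
          rw [he1] at hU
          exact (Matrix.isUnit_iff_isUnit_det _).mp hU
        · refine ⟨1, h, (one_mul h).symm, monic_one, by simp, hmonic, Or.inr ?_⟩
          rw [← hcp, eval_charpoly_fin2, neg_smul, one_smul, sub_neg_eq_add]
          rw [he1] at hU
          exact (Matrix.isUnit_iff_isUnit_det _).mp hU
  · -- converse direction
    rintro ⟨h₀, h₁, hfac, hm0, hu0, hm1, hu1⟩ φ hφ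
    have hdsum : h₀.natDegree + h₁.natDegree = 2 := by
      rw [← hm0.natDegree_mul hm1, ← hfac, hdeg]
    have hdcases : h₀.natDegree = 0 ∨ (h₀.natDegree = 1 ∧ h₁.natDegree = 1) ∨
        h₁.natDegree = 0 := by omega
    rcases hdcases with hd0 | ⟨hd0, hd1⟩ | hd1
    · -- h₀ = 1 : take e = 1
      have h01 : h₀ = 1 := hm0.natDegree_eq_zero.mp hd0
      have hh : h = h₁ := by rw [hfac, h01, one_mul]
      refine ⟨1, IsIdempotentElem.one, by rw [mul_one, one_mul], ?_⟩
      rcases hu1 with hu | hu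
      · left
        rw [Matrix.isUnit_iff_isUnit_det]
        have : φ.charpoly.eval 1 = (φ - 1).det := by
          rw [eval_charpoly_fin2, one_smul]
        rw [← this, hφ, hh]
        exact hu
      · right
        rw [Matrix.isUnit_iff_isUnit_det]
        have : φ.charpoly.eval (-1) = (φ + 1).det := by
          rw [eval_charpoly_fin2, neg_smul, one_smul, sub_neg_eq_add]
        rw [← this, hφ, hh]
        exact hu
    · -- both linear
      have h0e : h₀ = X + C (h₀.coeff 0) := hm0.eq_X_add_C hd0
      have h1e : h₁ = X + C (h₁.coeff 0) := hm1.eq_X_add_C hd1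
      set p := h₀.coeff 0 with hp'
      set q := h₁.coeff 0 with hq'
      have hpu : IsUnit p := by rwa [h0e, eval_add, eval_X, eval_C, zero_add] at hu0
      have hCH : (φ + p • 1) * (φ + q • 1) = 0 := by
        have hch := Matrix.aeval_self_charpoly φ
        rw [hφ, hfac, h0e, h1e, _root_.map_mul] at hch
        simpa [Algebra.algebraMap_eq_smul_one] using hch
      by_cases hupq : IsUnit (p - q)
      · obtain ⟨v, hv⟩ := hupq
        set w : R := ((v⁻¹ : Rˣ) : R) with hw
        have hvw : (p - q) * w = 1 := by rw [← hv]; exact v.mul_inv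
        set A := φ + p • (1 : Matrix (Fin 2) (Fin 2) R) with hA
        have hkey : A = (φ + q • 1) + (p - q) • 1 := by
          rw [hA, sub_smul]; abel
        have hA2 : A * A = (p - q) • A := by
          nth_rewrite 2 [hkey]
          rw [mul_add, hCH, zero_add, mul_smul_comm, mul_one]
        set e := w • A with he'
        have hee : e * e = e := by
          rw [he', smul_mul_smul_comm, hA2, smul_smul]
          congr 1
          linear_combination w * hvw
        have hcomm : φ * e = e * φ := by
          rw [he', mul_smul_comm, smul_mul_assoc, hA, mul_add, add_mul,
            mul_smul_comm, smul_mul_assoc, mul_one, one_mul]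
        have hue : (p - q) • e = A := by
          rw [he', smul_smul, hvw, one_smul]
        have hφA : φ = A - p • 1 := by rw [hA]; abel
        rcases hu1 with hu | hu
        · have hyu : IsUnit (-(1 + q)) := by
            apply IsUnit.neg
            rwa [h1e, eval_add, eval_X, eval_C] at hu
          refine ⟨e, hee, hcomm, Or.inl ?_⟩
          have : φ - e = (-p) • (1 - e) + (-(1 + q)) • e := by
            rw [hφA, ← hue]
            module
          rw [this]
          exact unit_comb hee hpu.neg hyu
        · have hyu : IsUnit (1 - q) := by
            rw [h1e, eval_add, eval_X, eval_C] at hu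
            have := hu.neg
            rwa [show -(-1 + q) = 1 - q by ring] at this
          refine ⟨e, hee, hcomm, Or.inr ?_⟩
          have : φ + e = (-p) • (1 - e) + (1 - q) • e := by
            rw [hφA, ← hue]
            module
          rw [this]
          exact unit_comb hee hpu.neg hyu
      · -- p - q not a unit ⇒ q is a unit ⇒ φ invertible
        have hqu : IsUnit q := by
          by_contra hq
          have := nonunits_add (R := R) (mem_nonunits_iff.mpr hupq) (mem_nonunits_iff.mpr hq)
          rw [sub_add_cancel] at this
          exact this hpu
        have hdet : IsUnit φ.det := by
          have : φ.charpoly.eval 0 = φ.det := by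
            rw [eval_charpoly_fin2, zero_smul, sub_zero]
          rw [← this, hφ, hfac, eval_mul, h0e, h1e]
          simpa using hpu.mul hqu
        refine ⟨0, by simp [IsIdempotentElem], by simp, Or.inl ?_⟩
        rw [sub_zero, Matrix.isUnit_iff_isUnit_det]
        exact hdet
    · -- h₁ = 1 : φ is a unit
      have h11 : h₁ = 1 := hm1.natDegree_eq_zero.mp hd1
      have hh : h = h₀ := by rw [hfac, h11, mul_one]
      have hdet : IsUnit φ.det := by
        have : φ.charpoly.eval 0 = φ.det := by
          rw [eval_charpoly_fin2, zero_smul, sub_zero]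
        rw [← this, hφ, hh]
        exact hu0
      refine ⟨0, by simp [IsIdempotentElem], by simp, Or.inl ?_⟩
      rw [sub_zero, Matrix.isUnit_iff_isUnit_det]
      exact hdet
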